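/- Let α, β > 0 with αβ > 2, γ > -1/β, K > 0, and let g : ℝ → ℝ satisfy g(x) = 0 for x ≤ 0 and |g(x)| ≤ K(x^γ 1_{0<x<1} + x^{-α} 1_{x≥1}) for x > 0. Define ρ_k = ∫_ℝ |g(x) g(x+k)|^{β/2} dx for k ∈ ℕ. Then there is a constant C such that ρ_k ≤ C k^{-αβ/2} for all k ≥ 1. -/

import Mathlib

open MeasureTheory Real Set

theorem stmt_4 (α β γ K : ℝ) (hα : 0 < α) (hβ : 0 < β) (hαβ : 2 < α * β)
    (hγ : -1 / β < γ) (hK : 0 < K) (g : ℝ → ℝ) (hg0 : ∀ x ≤ (0:ℝ), g x = 0)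
    (hg : ∀ x : ℝ, 0 < x →
      |g x| ≤ K * (x ^ γ * (Ioo (0:ℝ) 1).indicator 1 x + x ^ (-α) * (Ici (1:ℝ)).indicator 1 x)) :
    ∃ C : ℝ, ∀ k : ℕ, 1 ≤ k →
      (∫ x : ℝ, |g x * g (x + k)| ^ (β / 2)) ≤ C * (k : ℝ) ^ (-(α * β / 2)) := by
  have hb2 : 0 < β / 2 := by positivity
  set p : ℝ := γ * β / 2 with hp
  set q : ℝ := -(α * β / 2) with hq
  have hp1 : -1 < p := by
    have h1 : -1 < γ * β := by
      have := (div_lt_iff₀ hβ).mp hγ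
      linarith
    rw [hp]; linarith
  have hq1 : q < -1 := by rw [hq]; linarith
  set φ : ℝ → ℝ := fun x => (Ioo (0:ℝ) 1).indicator (fun x => x ^ p) x
      + (Ici (1:ℝ)).indicator (fun x => x ^ q) x with hφ
  have hφ_int : Integrable φ := by
    apply Integrable.add
    · exact ((intervalIntegral.integrableOn_Ioo_rpow_iff zero_lt_one).2 hp1).integrable_indicator
        measurableSet_Ioo
    · refine ((integrableOn_Ici_iff_integrableOn_Ioi (f := fun x : ℝ => x ^ q) (b := (1:ℝ)) (μ := volume) (by simp)).2 ?_).integrable_indicator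
        measurableSet_Ici
      exact (integrableOn_Ioi_rpow_iff zero_lt_one).2 hq1
  refine ⟨K ^ β * ∫ x, φ x, fun k hk => ?_⟩
  have hk1 : (1:ℝ) ≤ (k:ℝ) := by exact_mod_cast hk
  have hk0 : (0:ℝ) < (k:ℝ) := by linarith
  have key : ∀ a e : ℝ, 0 ≤ a →
      ((K * a ^ e) * (K * (k:ℝ) ^ (-α))) ^ (β / 2)
        = K ^ β * (k:ℝ) ^ q * a ^ (e * β / 2) := by
    intro a e ha
    rw [show (K * a ^ e) * (K * (k:ℝ) ^ (-α))
        = (K * K) * ((k:ℝ) ^ (-α) * a ^ e) by ring]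
    rw [Real.mul_rpow (by positivity) (by positivity),
        Real.mul_rpow (by positivity) (by positivity),
        Real.mul_rpow (by positivity) (by positivity)]
    rw [← Real.rpow_add hK, ← Real.rpow_mul hk0.le, ← Real.rpow_mul ha]
    rw [show β / 2 + β / 2 = β by ring, show -α * (β / 2) = q by rw [hq]; ring,
        show e * (β / 2) = e * β / 2 by ring]
    ring
  have hmono : ∀ x : ℝ, |g x * g (x + k)| ^ (β / 2) ≤ K ^ β * (k:ℝ) ^ q * φ x := by
    intro x
    rcases le_or_gt x 0 with hx | hx
    · have hx1 : x ∉ Ioo (0:ℝ) 1 := by simp [hx.not_gt]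
      have hx2 : x ∉ Ici (1:ℝ) := by simp; linarith
      rw [hg0 x hx, zero_mul, abs_zero, Real.zero_rpow hb2.ne', hφ]
      simp [indicator_of_notMem hx1, indicator_of_notMem hx2]
    · -- x > 0 case
      have hxk : (0:ℝ) < x + k := by linarith
      have hxk1 : x + k ∉ Ioo (0:ℝ) 1 := by simp; intro _; linarith
      have hxk2 : x + k ∈ Ici (1:ℝ) := by simp; linarith
      have hg2 : |g (x + k)| ≤ K * (k:ℝ) ^ (-α) := by
        have := hg (x + k) hxk
        rw [indicator_of_notMem hxk1, indicator_of_mem hxk2] at this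
        simp only [Pi.one_apply, mul_zero, zero_add, mul_one] at this
        calc |g (x + k)| ≤ K * (x + k) ^ (-α) := this
          _ ≤ K * (k:ℝ) ^ (-α) := by
              have := Real.rpow_le_rpow_of_nonpos hk0 (by linarith : (k:ℝ) ≤ x + k)
                (neg_nonpos.2 hα.le)
              nlinarith
      have habs : |g x * g (x + k)| = |g x| * |g (x + k)| := abs_mul _ _
      rcases lt_or_ge x 1 with hx1 | hx1
      · have hm1 : x ∈ Ioo (0:ℝ) 1 := ⟨hx, hx1⟩
        have hm2 : x ∉ Ici (1:ℝ) := by simp; linarith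
        have hg1 : |g x| ≤ K * x ^ γ := by
          have := hg x hx
          rw [indicator_of_mem hm1, indicator_of_notMem hm2] at this
          simpa using this
        have hφx : φ x = x ^ p := by
          rw [hφ]; simp [indicator_of_mem hm1, indicator_of_notMem hm2]
        rw [habs, hφx, ← key x γ hx.le]
        exact Real.rpow_le_rpow (by positivity)
          (mul_le_mul hg1 hg2 (abs_nonneg _) (by positivity)) hb2.le
      · have hm1 : x ∉ Ioo (0:ℝ) 1 := by simp; intro _; linarith
        have hm2 : x ∈ Ici (1:ℝ) := hx1
        have hg1 : |g x| ≤ K * x ^ (-α) := by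
          have := hg x hx
          rw [indicator_of_notMem hm1, indicator_of_mem hm2] at this
          simpa using this
        have hφx : φ x = x ^ q := by
          rw [hφ]; simp [indicator_of_notMem hm1, indicator_of_mem hm2]
        rw [habs, hφx]
        calc (|g x| * |g (x + ↑k)|) ^ (β / 2)
            ≤ (K * x ^ (-α) * (K * (k:ℝ) ^ (-α))) ^ (β / 2) :=
              Real.rpow_le_rpow (by positivity)
                (mul_le_mul hg1 hg2 (abs_nonneg _) (by positivity)) hb2.le
          _ = K ^ β * (k:ℝ) ^ q * x ^ (-α * β / 2) := key x (-α) hx.le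
          _ = K ^ β * (k:ℝ) ^ q * x ^ q := by
              rw [show -α * β / 2 = q by rw [hq]; ring]
  calc (∫ x : ℝ, |g x * g (x + k)| ^ (β / 2))
      ≤ ∫ x : ℝ, K ^ β * (k:ℝ) ^ q * φ x := by
        refine integral_mono_of_nonneg (ae_of_all _ fun x => ?_)
          ((hφ_int.const_mul _)) (ae_of_all _ hmono)
        exact Real.rpow_nonneg (abs_nonneg _) _
    _ = K ^ β * (∫ x, φ x) * (k:ℝ) ^ q := by
        rw [integral_const_mul]; ring
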